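/- There exists a connected graph G with an induced connected subgraph H of finite adhesion, a tendril S in G, a set U ⊆ V(H), and a finite set F of vertices of the dominated torso K of H in G, such that F separates U from the K-projection of S in K, but the set X := (F ∩ V(H)) ∪ ⋃{N_G(D) : D ∈ 𝒟′, v_D ∈ F} does not separate U from S in G. -/

import Mathlib

/-- A ray in `G`: a one-way infinite path. -/
def IsRay {V : Type*} (G : SimpleGraph V) (f : ℕ → V) : Prop :=
  Function.Injective f ∧ ∀ n, G.Adj (f n) (f (n + 1))

/-- `F` separates `U` from `S` in `G`: every path (walk) from a vertex of `U`
to a vertex of `S` meets `F`. -/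
def Separates {V : Type*} (G : SimpleGraph V) (F U S : Set V) : Prop :=
  ∀ u ∈ U, ∀ s ∈ S, ∀ p : G.Walk u s, ∃ x ∈ p.support, x ∈ F

/-- `U` is dispersed in `G`: every ray can be separated from `U` by a finite vertex set. -/
def Dispersed {V : Type*} (G : SimpleGraph V) (U : Set V) : Prop :=
  ∀ f : ℕ → V, IsRay G f → ∃ F : Set V, F.Finite ∧ Separates G F U (Set.range f)

/-- `v` is reachable from `u` by a walk avoiding `H` entirely. -/
def ReachOutside {V : Type*} (G : SimpleGraph V) (H : Set V) (u v : V) : Prop :=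
  ∃ p : G.Walk u v, ∀ x ∈ p.support, x ∉ H

/-- `D` is a connected component of `G − H` (the induced subgraph on `V(G) \ H`). -/
def IsComp {V : Type*} (G : SimpleGraph V) (H D : Set V) : Prop :=
  D.Nonempty ∧ ∀ u ∈ D, ∀ v : V, (v ∈ D ↔ v ∉ H ∧ ReachOutside G H u v)

/-- The neighborhood `N_G(D)`: vertices outside `D` adjacent in `G` to a vertex of `D`. -/
def nbhdOf {V : Type*} (G : SimpleGraph V) (D : Set V) : Set V :=
  {v | v ∉ D ∧ ∃ d ∈ D, G.Adj v d}

/-- `H` has finite adhesion in `G`: every component of `G − H` has finite neighborhood. -/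
def FiniteAdhesion {V : Type*} (G : SimpleGraph V) (H : Set V) : Prop :=
  ∀ D : Set V, IsComp G H D → (nbhdOf G D).Finite

/-- The component of `G − H` containing `u` (for `u ∉ H`). -/
def compOf {V : Type*} (G : SimpleGraph V) (H : Set V) (u : V) : Set V :=
  {v | v ∉ H ∧ ReachOutside G H u v}

/-- `𝒟′`: components of `G − H` whose adhesion set is shared by only finitely
many components. -/
def Dfin {V : Type*} (G : SimpleGraph V) (H : Set V) : Set (Set V) :=
  {D | IsComp G H D ∧ {D' | IsComp G H D' ∧ nbhdOf G D' = nbhdOf G D}.Finite}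

/-- `𝒟″`: components of `G − H` whose adhesion set is shared by infinitely
many components. -/
def Dinf {V : Type*} (G : SimpleGraph V) (H : Set V) : Set (Set V) :=
  {D | IsComp G H D ∧ ¬ {D' | IsComp G H D' ∧ nbhdOf G D' = nbhdOf G D}.Finite}

/-- `η` is an admissible contraction map: each `D ∈ 𝒟″` is contracted onto a vertex
`η D ∈ N_G(D)`, and for every `D ∈ 𝒟″` the map `η` restricted to the components
sharing the adhesion set `N_G(D)` surjects onto `N_G(D)`. -/
def EtaOK {V : Type*} (G : SimpleGraph V) (H : Set V) (η : Set V → V) : Prop :=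
  (∀ D ∈ Dinf G H, η D ∈ nbhdOf G D) ∧
  (∀ D ∈ Dinf G H, ∀ a ∈ nbhdOf G D,
    ∃ D' ∈ Dinf G H, nbhdOf G D' = nbhdOf G D ∧ η D' = a)

open Classical in
/-- The contraction map `ρ` onto the vertex set of the dominated torso:
vertices of `H` are kept, each `D ∈ 𝒟′` is contracted to the new vertex
`Sum.inr D`, and each `D ∈ 𝒟″` is contracted onto `η D ∈ N_G(D)`. -/
noncomputable def rho {V : Type*} (G : SimpleGraph V) (H : Set V) (η : Set V → V) :
    V → V ⊕ Set V := fun u =>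
  if u ∈ H then Sum.inl u
  else if compOf G H u ∈ Dfin G H then Sum.inr (compOf G H u)
  else Sum.inl (η (compOf G H u))

/-- The dominated torso `K` of `H` in `G`: the contraction minor of `G`
witnessed by `ρ`. -/
noncomputable def Torso {V : Type*} (G : SimpleGraph V) (H : Set V) (η : Set V → V) :
    SimpleGraph (V ⊕ Set V) where
  Adj a b := a ≠ b ∧ ∃ u v : V, rho G H η u = a ∧ rho G H η v = b ∧ G.Adj u v
  symm := ⟨by
    rintro a b ⟨hne, u, v, hu, hv, huv⟩
    exact ⟨hne.symm, v, u, hv, hu, huv.symm⟩⟩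
  loopless := ⟨by rintro a ⟨hne, -⟩; exact hne rfl⟩

/-- The vertex set of the dominated torso. -/
def torsoVerts {V : Type*} (G : SimpleGraph V) (H : Set V) : Set (V ⊕ Set V) :=
  Sum.inl '' H ∪ Sum.inr '' Dfin G H

/-- A tendril in `G`: a ray with infinitely many vertices in `H`. -/
def IsTendril {V : Type*} (G : SimpleGraph V) (H : Set V) (f : ℕ → V) : Prop :=
  IsRay G f ∧ {n | f n ∈ H}.Infinite

open Classical in
/-- The `H`-masking of a sequence: vertices outside `H` are replaced by their
component of `G − H`. -/
noncomputable def mask {V : Type*} (G : SimpleGraph V) (H : Set V) : V → V ⊕ Set V :=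
  fun u => if u ∈ H then Sum.inl u else Sum.inr (compOf G H u)

/-- The indices of a ray kept by the `K`-projection: vertices of `H`, and the
first index of each maximal run of a component `D ∈ 𝒟′`. -/
def keepIdx {V : Type*} (G : SimpleGraph V) (H : Set V) (f : ℕ → V) (n : ℕ) : Prop :=
  f n ∈ H ∨
    (f n ∉ H ∧ compOf G H (f n) ∈ Dfin G H ∧
      (n = 0 ∨ mask G H (f (n - 1)) ≠ mask G H (f n)))

/-- The `K`-projection of a tendril: maximal runs of a component `D ∈ 𝒟′` are
replaced by the single vertex `v_D`, and terms in components of `𝒟″` are removed. -/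
noncomputable def rayProj {V : Type*} (G : SimpleGraph V) (H : Set V) (η : Set V → V)
    (f : ℕ → V) : ℕ → V ⊕ Set V :=
  fun m => rho G H η (f (Nat.nth (keepIdx G H f) m))

/-- `D̂′`: components of `𝒟′` whose contracted vertex lies in `F`. -/
def DhatFin {V : Type*} (G : SimpleGraph V) (H : Set V) (F : Set (V ⊕ Set V)) :
    Set (Set V) :=
  {D | D ∈ Dfin G H ∧ Sum.inr D ∈ F}

/-- `D̂″`: components `D ∈ 𝒟″` such that some term of the `H`-masking of the
tendril equals `D` and the next vertex of the tendril lies in `F`. -/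
def DhatInf {V : Type*} (G : SimpleGraph V) (H : Set V) (f : ℕ → V)
    (F : Set (V ⊕ Set V)) : Set (Set V) :=
  {D | D ∈ Dinf G H ∧ ∃ n : ℕ, f n ∉ H ∧ compOf G H (f n) = D ∧ Sum.inl (f (n + 1)) ∈ F}

/-- The `S`-modification `F_S` of a set `F ⊆ V(K)`. -/
def Smod {V : Type*} (G : SimpleGraph V) (H : Set V) (f : ℕ → V)
    (F : Set (V ⊕ Set V)) : Set V :=
  (Sum.inl ⁻¹' F ∩ H) ∪ ⋃ D ∈ DhatFin G H F ∪ DhatInf G H f F, nbhdOf G D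

namespace PitzWitness

/-- Vertex type: `Sum.inl j` is `x_j`, `Sum.inr i` is `z_i`. -/
abbrev VV : Type := ℕ ⊕ ℕ

/-- Edge relation of the witness graph. -/
def EE : VV → VV → Prop
  | .inl j, .inl k => k = j + 1 ∨ j = k + 1
  | .inl j, .inr _ => j = 1 ∨ j = 2 ∨ j = 3
  | .inr _, .inl j => j = 1 ∨ j = 2 ∨ j = 3
  | .inr _, .inr _ => False

/-- The witness graph. -/
def GG : SimpleGraph VV where
  Adj a b := a ≠ b ∧ EE a b
  symm := ⟨by
    rintro (a | a) (b | b) ⟨hne, he⟩ <;>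
      refine ⟨Ne.symm hne, ?_⟩ <;> simp only [EE] at he ⊢ <;> omega⟩
  loopless := ⟨by rintro a ⟨hne, -⟩; exact hne rfl⟩

/-- The subgraph `H`: all `x_j`. -/
def HH : Set VV := Set.range Sum.inl

lemma x_mem_H (j : ℕ) : Sum.inl j ∈ HH := ⟨j, rfl⟩

lemma z_not_mem_H (i : ℕ) : Sum.inr i ∉ HH := by
  rintro ⟨j, hj⟩; exact Sum.inl_ne_inr hj

/-- Every neighbor of `z_i` lies in `H`. -/
lemma z_adj_mem {i : ℕ} {w : VV} (h : GG.Adj (Sum.inr i) w) : w ∈ HH := by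
  rcases w with j | i'
  · exact x_mem_H j
  · exact absurd h.2 (by simp [EE])

/-- Any walk from `z_i` avoiding `H` is trivial. -/
lemma walk_from_z {i : ℕ} {v : VV} (p : GG.Walk (Sum.inr i) v) :
    (∀ x ∈ p.support, x ∉ HH) → v = Sum.inr i := by
  cases p with
  | nil => exact fun _ => rfl
  | cons h q =>
    rename_i w
    intro hp
    refine absurd (z_adj_mem h) (hp w ?_)
    rw [SimpleGraph.Walk.support_cons]
    exact List.mem_cons_of_mem _ q.start_mem_support

lemma reachOutside_z_iff {i : ℕ} {v : VV} :
    (v ∉ HH ∧ ReachOutside GG HH (Sum.inr i) v) ↔ v = Sum.inr i := by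
  constructor
  · rintro ⟨-, p, hp⟩; exact walk_from_z p hp
  · rintro rfl
    refine ⟨z_not_mem_H i, SimpleGraph.Walk.nil, ?_⟩
    intro x hx
    simp only [SimpleGraph.Walk.support_nil, List.mem_singleton] at hx
    subst hx; exact z_not_mem_H i

lemma isComp_z (i : ℕ) : IsComp GG HH {Sum.inr i} := by
  refine ⟨⟨Sum.inr i, rfl⟩, ?_⟩
  rintro u hu v
  rcases hu with rfl
  rw [Set.mem_singleton_iff]
  exact reachOutside_z_iff.symm

lemma comp_eq {D : Set VV} (hD : IsComp GG HH D) : ∃ i, D = {Sum.inr i} := by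
  obtain ⟨⟨u, hu⟩, h2⟩ := hD
  have h3 := (h2 u hu u).mp hu
  obtain ⟨hnH, -⟩ := h3
  obtain ⟨i, rfl⟩ : ∃ i, u = Sum.inr i := by
    rcases u with j | i
    · exact absurd (x_mem_H j) hnH
    · exact ⟨i, rfl⟩
  refine ⟨i, ?_⟩
  ext v
  rw [h2 _ hu v, Set.mem_singleton_iff]
  exact reachOutside_z_iff

lemma compOf_z (i : ℕ) : compOf GG HH (Sum.inr i) = {Sum.inr i} := by
  ext v
  rw [Set.mem_singleton_iff]
  exact reachOutside_z_iff

lemma adj_z_iff {v : VV} {i : ℕ} : GG.Adj v (Sum.inr i) ↔ ∃ j, v = Sum.inl j ∧ (j = 1 ∨ j = 2 ∨ j = 3) := by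
  constructor
  · rintro ⟨hne, he⟩
    rcases v with j | i'
    · exact ⟨j, rfl, by simpa [EE] using he⟩
    · exact absurd he (by simp [EE])
  · rintro ⟨j, rfl, hj⟩
    exact ⟨by simp, by simpa [EE] using hj⟩

lemma nbhd_z (i : ℕ) :
    nbhdOf GG {Sum.inr i} = {Sum.inl 1, Sum.inl 2, Sum.inl 3} := by
  ext v
  simp only [nbhdOf, Set.mem_setOf_eq, Set.mem_singleton_iff, Set.mem_insert_iff]
  constructor
  · rintro ⟨-, d, rfl, hadj⟩
    obtain ⟨j, rfl, hj⟩ := adj_z_iff.mp hadj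
    rcases hj with h | h | h <;> subst h <;> simp
  · rintro (rfl | rfl | rfl) <;>
      exact ⟨by simp, Sum.inr i, rfl, adj_z_iff.mpr ⟨_, rfl, by omega⟩⟩

lemma same_nbhd_infinite (i : ℕ) :
    ¬ {D' | IsComp GG HH D' ∧ nbhdOf GG D' = nbhdOf GG {Sum.inr i}}.Finite := by
  intro hfin
  have hsub : Set.range (fun i' : ℕ => ({Sum.inr i'} : Set VV)) ⊆
      {D' | IsComp GG HH D' ∧ nbhdOf GG D' = nbhdOf GG {Sum.inr i}} := by
    rintro D ⟨i', rfl⟩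
    exact ⟨isComp_z i', by rw [nbhd_z, nbhd_z]⟩
  have hinj : Function.Injective (fun i' : ℕ => ({Sum.inr i'} : Set VV)) := by
    intro a b hab
    have hab' : ({Sum.inr a} : Set VV) = {Sum.inr b} := hab
    have := Set.singleton_eq_singleton_iff.mp hab'
    simpa using this
  exact (Set.infinite_range_of_injective hinj) (hfin.subset hsub)

lemma Dfin_empty : Dfin GG HH = ∅ := by
  ext D
  simp only [Dfin, Set.mem_setOf_eq, Set.mem_empty_iff_false, iff_false, not_and]
  intro hD
  obtain ⟨i, rfl⟩ := comp_eq hD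
  exact same_nbhd_infinite i

lemma Dinf_z (i : ℕ) : {Sum.inr i} ∈ Dinf GG HH :=
  ⟨isComp_z i, same_nbhd_infinite i⟩

open Classical in
/-- The contraction target map. -/
noncomputable def ee : Set VV → VV := fun D =>
  if h : ∃ i, D = {Sum.inr i} then Sum.inl (1 + (h.choose + 1) % 3) else Sum.inl 0

lemma ee_z (i : ℕ) : ee {Sum.inr i} = Sum.inl (1 + (i + 1) % 3) := by
  have h : ∃ i' : ℕ, ({Sum.inr i} : Set VV) = {Sum.inr i'} := ⟨i, rfl⟩
  have hc : h.choose = i := by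
    have h1 := Set.singleton_eq_singleton_iff.mp h.choose_spec
    simpa using h1.symm
  simp only [ee, dif_pos h, hc]

lemma rho_x (j : ℕ) : rho GG HH ee (Sum.inl j) = Sum.inl (Sum.inl j) := by
  rw [rho, if_pos (x_mem_H j)]

lemma rho_z (i : ℕ) :
    rho GG HH ee (Sum.inr i) = Sum.inl (Sum.inl (1 + (i + 1) % 3)) := by
  rw [rho, if_neg (z_not_mem_H i), compOf_z,
    if_neg (by rw [Dfin_empty]; exact Set.notMem_empty _), ee_z]

/-- Every `rho` value is `Sum.inl (Sum.inl j)` for some `j`. -/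
lemma rho_cases (v : VV) : ∃ j, rho GG HH ee v = Sum.inl (Sum.inl j) ∧
    (v = Sum.inl j ∨ (1 ≤ j ∧ j ≤ 3 ∧ ∃ i, v = Sum.inr i)) := by
  rcases v with j | i
  · exact ⟨j, rho_x j, Or.inl rfl⟩
  · exact ⟨1 + (i + 1) % 3, rho_z i, Or.inr ⟨by omega, by omega, i, rfl⟩⟩

/-- The tendril. -/
noncomputable def ff : ℕ → VV := fun n =>
  if n = 1 then Sum.inr 0 else if n = 0 then Sum.inl 2 else Sum.inl (n + 1)

lemma isRay_ff : IsRay GG ff := by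
  constructor
  · intro m n h
    simp only [ff] at h
    split_ifs at h <;> simp_all <;> omega
  · intro n
    rcases n with _ | _ | n
    · exact ⟨by simp [ff], by simp [ff, EE]⟩
    · exact ⟨by simp [ff], by simp [ff, EE]⟩
    · refine ⟨?_, ?_⟩ <;> simp [ff, EE]

lemma tendril_ff : IsTendril GG HH ff := by
  refine ⟨isRay_ff, ?_⟩
  have : ({1}ᶜ : Set ℕ) ⊆ {n | ff n ∈ HH} := by
    intro n hn
    simp only [Set.mem_compl_iff, Set.mem_singleton_iff] at hn
    simp only [Set.mem_setOf_eq, ff, if_neg hn]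
    split_ifs <;> exact x_mem_H _
  exact Set.Infinite.mono this ((Set.finite_singleton 1).infinite_compl)

/-- The separator in the torso. -/
def FF : Set (VV ⊕ Set VV) := {Sum.inl (Sum.inl 2), Sum.inl (Sum.inl 3)}

/-- Key step: a torso edge from `{x₀, x₁}` stays in `{x₀, x₁, x₂, x₃}`. -/
lemma torso_step {a c : VV ⊕ Set VV} (h : (Torso GG HH ee).Adj a c)
    (ha : a = Sum.inl (Sum.inl 0) ∨ a = Sum.inl (Sum.inl 1)) :
    c = Sum.inl (Sum.inl 0) ∨ c = Sum.inl (Sum.inl 1) ∨ c ∈ FF := by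
  obtain ⟨-, u, v, hu, hv, huv⟩ := h
  obtain ⟨j, hrv, hvc⟩ := rho_cases v
  rw [hrv] at hv
  subst hv
  obtain ⟨-, he⟩ := huv
  -- figure out u
  obtain ⟨k, hru, huc⟩ := rho_cases u
  rw [hru] at hu
  have hk : k = 0 ∨ k = 1 := by
    rcases ha with ha | ha <;> rw [ha] at hu <;> simp_all
  -- now analyze edges
  have hj : j ≤ 3 := by
    rcases huc with rfl | ⟨hk1, hk3, i, rfl⟩
    · -- u = x_k, k ≤ 1
      rcases hvc with rfl | ⟨hj1, hj3, i, rfl⟩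
      · simp only [EE] at he; omega
      · simp only [EE] at he; omega
    · -- u = z_i, so v must be x_j with j ∈ {1,2,3}
      rcases hvc with rfl | ⟨hj1, hj3, i', rfl⟩
      · simp only [EE] at he; omega
      · simp only [EE] at he
  interval_cases j
  · exact Or.inl rfl
  · exact Or.inr (Or.inl rfl)
  · exact Or.inr (Or.inr (by simp [FF]))
  · exact Or.inr (Or.inr (by simp [FF]))

lemma torso_walk_stay : ∀ {a b : VV ⊕ Set VV} (p : (Torso GG HH ee).Walk a b),
    (a = Sum.inl (Sum.inl 0) ∨ a = Sum.inl (Sum.inl 1)) →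
    (∀ x ∈ p.support, x ∉ FF) →
    (b = Sum.inl (Sum.inl 0) ∨ b = Sum.inl (Sum.inl 1)) := by
  intro a b p
  induction p with
  | nil => intro ha _; exact ha
  | cons h q ih =>
    rename_i u w b'
    intro ha hsup
    have hsup' : ∀ x ∈ q.support, x ∉ FF := fun x hx => hsup x (by
      rw [SimpleGraph.Walk.support_cons]; exact List.mem_cons_of_mem _ hx)
    have hw := torso_step h ha
    rcases hw with hw | hw | hw
    · exact ih (Or.inl hw) hsup'
    · exact ih (Or.inr hw) hsup'
    · refine absurd hw (hsup w ?_)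
      rw [SimpleGraph.Walk.support_cons]
      exact List.mem_cons_of_mem _ q.start_mem_support

lemma reach_x (j : ℕ) : GG.Reachable (Sum.inl 0) (Sum.inl j) := by
  induction j with
  | zero => exact SimpleGraph.Reachable.refl _
  | succ n ih =>
    exact ih.trans (SimpleGraph.Adj.reachable ⟨by simp, by simp [EE]⟩)

lemma GG_connected : GG.Connected := by
  rw [SimpleGraph.connected_iff]
  refine ⟨?_, ⟨Sum.inl 0⟩⟩
  have key : ∀ v : VV, GG.Reachable (Sum.inl 0) v := by
    intro v
    rcases v with j | i
    · exact reach_x j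
    · exact (reach_x 1).trans (SimpleGraph.Adj.reachable ⟨by simp, by simp [EE]⟩)
  intro a b
  exact (key a).symm.trans (key b)

lemma induce_connected : (GG.induce HH).Connected := by
  rw [SimpleGraph.connected_iff]
  refine ⟨?_, ⟨⟨Sum.inl 0, x_mem_H 0⟩⟩⟩
  have key : ∀ j : ℕ, (GG.induce HH).Reachable ⟨Sum.inl 0, x_mem_H 0⟩ ⟨Sum.inl j, x_mem_H j⟩ := by
    intro j
    induction j with
    | zero => exact SimpleGraph.Reachable.refl _
    | succ n ih =>
      refine ih.trans (SimpleGraph.Adj.reachable ?_)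
      exact ⟨by simp, by simp [EE]⟩
  rintro ⟨a, ha⟩ ⟨b, hb⟩
  obtain ⟨j, rfl⟩ := ha
  obtain ⟨k, rfl⟩ := hb
  exact (key j).symm.trans (key k)

lemma finiteAdhesion : FiniteAdhesion GG HH := by
  intro D hD
  obtain ⟨i, rfl⟩ := comp_eq hD
  rw [nbhd_z]
  exact (Set.finite_singleton _).insert _ |>.insert _

lemma etaOK : EtaOK GG HH ee := by
  constructor
  · intro D hD
    obtain ⟨i, rfl⟩ := comp_eq hD.1
    rw [nbhd_z, ee_z]
    have : 1 + (i + 1) % 3 = 1 ∨ 1 + (i + 1) % 3 = 2 ∨ 1 + (i + 1) % 3 = 3 := by omega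
    rcases this with h | h | h <;> rw [h] <;> simp
  · intro D hD a ha
    obtain ⟨i, rfl⟩ := comp_eq hD.1
    rw [nbhd_z] at ha
    rcases ha with rfl | rfl | rfl
    · exact ⟨{Sum.inr 2}, Dinf_z 2, by rw [nbhd_z, nbhd_z], by rw [ee_z]⟩
    · exact ⟨{Sum.inr 0}, Dinf_z 0, by rw [nbhd_z, nbhd_z], by rw [ee_z]⟩
    · exact ⟨{Sum.inr 1}, Dinf_z 1, by rw [nbhd_z, nbhd_z], by rw [ee_z]⟩

lemma rayProj_range {s : VV ⊕ Set VV} (hs : s ∈ Set.range (rayProj GG HH ee ff)) :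
    ∃ j, 2 ≤ j ∧ s = Sum.inl (Sum.inl j) := by
  obtain ⟨m, rfl⟩ := hs
  unfold rayProj
  set N := Nat.nth (keepIdx GG HH ff) m with hN
  rcases Nat.lt_or_ge N 2 with h | h
  · interval_cases N
    · exact ⟨2, le_refl 2, by simp [ff, rho_x]⟩
    · exact ⟨2, le_refl 2, by simp [ff, rho_z]⟩
  · refine ⟨N + 1, by omega, ?_⟩
    have h1 : ff N = Sum.inl (N + 1) := by
      simp only [ff]
      rw [if_neg (by omega), if_neg (by omega)]
    rw [h1, rho_x]

lemma torso_separates :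
    Separates (Torso GG HH ee) FF (Sum.inl '' {Sum.inl 0})
      (Set.range (rayProj GG HH ee ff)) := by
  rintro u hu s hs p
  obtain ⟨u', hu', rfl⟩ := hu
  rcases hu' with rfl
  obtain ⟨j, hj2, rfl⟩ := rayProj_range hs
  by_contra hcon
  push_neg at hcon
  have := torso_walk_stay p (Or.inl rfl) hcon
  rcases this with h | h <;> simp_all

lemma not_separates :
    ¬ Separates GG ((Sum.inl ⁻¹' FF ∩ HH) ∪ ⋃ D ∈ DhatFin GG HH FF, nbhdOf GG D)
      {Sum.inl 0} (Set.range ff) := by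
  intro hsep
  have hz : (Sum.inr 0 : VV) ∈ Set.range ff := ⟨1, by simp [ff]⟩
  have adj01 : GG.Adj (Sum.inl 0) (Sum.inl 1) := ⟨by simp, by simp [EE]⟩
  have adj1z : GG.Adj (Sum.inl 1) (Sum.inr 0) := ⟨by simp, by simp [EE]⟩
  obtain ⟨x, hxsup, hxF⟩ := hsep (Sum.inl 0) rfl (Sum.inr 0) hz
    (SimpleGraph.Walk.cons adj01 (SimpleGraph.Walk.cons adj1z SimpleGraph.Walk.nil))
  have hDhat : DhatFin GG HH FF = ∅ := by
    ext D
    simp only [DhatFin, Set.mem_setOf_eq, Set.mem_empty_iff_false, iff_false, not_and]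
    intro hD
    rw [Dfin_empty] at hD
    exact absurd hD (Set.notMem_empty D)
  rw [hDhat] at hxF
  simp only [Set.mem_empty_iff_false, Set.iUnion_of_empty, Set.iUnion_empty,
    Set.union_empty, Set.mem_inter_iff, Set.mem_preimage, FF, Set.mem_insert_iff,
    Set.mem_singleton_iff] at hxF
  have hxsup' : x = Sum.inl 0 ∨ x = Sum.inl 1 ∨ x = Sum.inr 0 := by
    simpa [SimpleGraph.Walk.support_cons, SimpleGraph.Walk.support_nil] using hxsup
  rcases hxsup' with rfl | rfl | rfl <;> rcases hxF with ⟨h | h, -⟩ <;> simp_all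

end PitzWitness


/-- There exist a connected graph `G`, an induced connected subgraph `H` of finite
adhesion, a tendril `S`, a set `U ⊆ V(H)` and a finite set `F` of vertices of the
dominated torso `K`, such that `F` separates `U` from the `K`-projection of `S`
in `K`, but `X := (F ∩ V(H)) ∪ ⋃ {N_G(D) : D ∈ 𝒟′, v_D ∈ F}` does not separate
`U` from `S` in `G`. -/
theorem pitz_separator_fails :
    ∃ (V : Type) (G : SimpleGraph V) (H : Set V) (η : Set V → V)
      (f : ℕ → V) (U : Set V) (F : Set (V ⊕ Set V)),
      G.Connected ∧ (G.induce H).Connected ∧ FiniteAdhesion G H ∧ EtaOK G H η ∧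
      IsTendril G H f ∧ U ⊆ H ∧ F.Finite ∧ F ⊆ torsoVerts G H ∧
      Separates (Torso G H η) F (Sum.inl '' U) (Set.range (rayProj G H η f)) ∧
      ¬ Separates G ((Sum.inl ⁻¹' F ∩ H) ∪ ⋃ D ∈ DhatFin G H F, nbhdOf G D)
          U (Set.range f) := by
  exact ⟨PitzWitness.VV, PitzWitness.GG, PitzWitness.HH, PitzWitness.ee,
    PitzWitness.ff, {Sum.inl 0}, PitzWitness.FF,
    PitzWitness.GG_connected, PitzWitness.induce_connected,
    PitzWitness.finiteAdhesion, PitzWitness.etaOK, PitzWitness.tendril_ff,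
    by rintro v rfl; exact PitzWitness.x_mem_H 0,
    (Set.finite_singleton _).insert _,
    by rintro v (rfl | rfl) <;> exact Or.inl ⟨_, PitzWitness.x_mem_H _, rfl⟩,
    PitzWitness.torso_separates, PitzWitness.not_separates⟩
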